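/- Let [Π_n(G)] be a set of representatives of the conjugacy classes of n-slices of the finite group G, and let B_n(G) be the subgroup of ∏_{T̄ ∈ [Π_n(G)]} ℤ generated by the vectors v_{S̄} (S̄ ∈ [Π_n(G)]), where v_{S̄} has T̄-coordinate m(T̄,S̄). Then the quotient abelian group (∏_{T̄ ∈ [Π_n(G)]} ℤ)/B_n(G) is isomorphic to ⊕_{S̄ ∈ [Π_n(G)]} ℤ/[N_G(S̄):S_0]ℤ. -/

import Mathlib

set_option linter.unusedSectionVars false
set_option maxHeartbeats 1000000


variable {G : Type*}

/-- The conjugate slice `ᵍS̄ = (gS₀g⁻¹, …, gSₙg⁻¹)`. -/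
def sliceConj [Group G] {n : ℕ} (g : G) (S : Fin (n + 1) → Subgroup G) :
    Fin (n + 1) → Subgroup G :=
  fun i => (S i).map (MulAut.conj g).toMonoidHom

/-- The mark `m(K̄,S̄) = |{gS₀ ∈ G/S₀ : g⁻¹Kᵢg ≤ Sᵢ for all i}|`. -/
noncomputable def mark [Group G] {n : ℕ} (K S : Fin (n + 1) → Subgroup G) : ℕ :=
  Nat.card {x : G ⧸ S 0 //
    ∃ g : G, QuotientGroup.mk g = x ∧ ∀ i, ∀ k ∈ K i, g⁻¹ * k * g ∈ S i}

/-- The normalizer `N_G(S̄) = ⋂ᵢ N_G(Sᵢ)` of a slice. -/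
def sliceNormalizer [Group G] {n : ℕ} (S : Fin (n + 1) → Subgroup G) : Subgroup G :=
  ⨅ i, Subgroup.normalizer (S i : Set G)

/-- The index `[N_G(S̄) : S₀]`. -/
noncomputable def sliceIndex [Group G] {n : ℕ} (S : Fin (n + 1) → Subgroup G) : ℕ :=
  (S 0).relIndex (sliceNormalizer S)

section Aux

attribute [local instance] Fintype.ofFinite Classical.propDecidable

variable [Group G] {n : ℕ}

lemma mem_sliceConj {g : G} {S : Fin (n + 1) → Subgroup G} {i : Fin (n + 1)} {k : G} :
    k ∈ sliceConj g S i ↔ g⁻¹ * k * g ∈ S i := by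
  rw [sliceConj, Subgroup.mem_map_equiv]
  simp [MulAut.conj, mul_assoc]

lemma sliceConj_one (S : Fin (n + 1) → Subgroup G) : sliceConj (1 : G) S = S := by
  funext i; ext k; simp [mem_sliceConj]

lemma sliceConj_sliceConj (g h : G) (S : Fin (n + 1) → Subgroup G) :
    sliceConj g (sliceConj h S) = sliceConj (g * h) S := by
  funext i; ext k
  simp only [mem_sliceConj, mul_inv_rev]
  have : h⁻¹ * (g⁻¹ * k * g) * h = h⁻¹ * g⁻¹ * k * (g * h) := by group
  rw [this]

lemma sliceConj_mono {g : G} {A B : Fin (n + 1) → Subgroup G} (h : ∀ i, A i ≤ B i) :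
    ∀ i, sliceConj g A i ≤ sliceConj g B i :=
  fun i => Subgroup.map_mono (h i)

lemma cond_iff (K S : Fin (n + 1) → Subgroup G) (h : G) :
    (∀ i, ∀ k ∈ K i, h⁻¹ * k * h ∈ S i) ↔ ∀ i, K i ≤ sliceConj h S i := by
  constructor
  · intro H i k hk; exact mem_sliceConj.2 (H i k hk)
  · intro H i k hk; exact mem_sliceConj.1 (H i hk)

lemma mark_eq (K S : Fin (n + 1) → Subgroup G) :
    mark K S = Nat.card {x : G ⧸ S 0 //
      ∃ g : G, QuotientGroup.mk g = x ∧ ∀ i, K i ≤ sliceConj g S i} := by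
  apply Nat.card_congr
  apply Equiv.subtypeEquivRight
  intro x
  simp only [cond_iff]

/-- weight of a slice -/
noncomputable def wt (S : Fin (n + 1) → Subgroup G) : ℕ := ∑ i, Nat.card (S i)

variable [Finite G]

lemma wt_pos (S : Fin (n + 1) → Subgroup G) : 0 < wt S := by
  have h0 : 0 < Nat.card (S 0) := Nat.card_pos
  exact h0.trans_le (Finset.single_le_sum (f := fun i => Nat.card (S i)) (fun i _ => Nat.zero_le _) (Finset.mem_univ (0 : Fin (n + 1))))

lemma wt_le_max (S : Fin (n + 1) → Subgroup G) : wt S ≤ (n + 1) * Nat.card G := by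
  calc wt S ≤ ∑ _i : Fin (n + 1), Nat.card G :=
        Finset.sum_le_sum (fun i _ => Subgroup.card_le_card_group _)
    _ = (n + 1) * Nat.card G := by simp [Finset.sum_const, mul_comm]

lemma card_sliceConj (g : G) (S : Fin (n + 1) → Subgroup G) (i : Fin (n + 1)) :
    Nat.card (sliceConj g S i) = Nat.card (S i) :=
  (Nat.card_congr ((S i).equivMapOfInjective _ (MulAut.conj g).injective).toEquiv).symm

lemma wt_sliceConj (g : G) (S : Fin (n + 1) → Subgroup G) : wt (sliceConj g S) = wt S := by
  unfold wt; exact Finset.sum_congr rfl fun i _ => card_sliceConj g S i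

lemma card_le_of_le {K S : Subgroup G} (h : K ≤ S) : Nat.card K ≤ Nat.card S :=
  Nat.card_mono (Set.toFinite _) h

lemma wt_le_of_le {K S : Fin (n + 1) → Subgroup G} (h : ∀ i, K i ≤ S i) : wt K ≤ wt S :=
  Finset.sum_le_sum (fun i _ => card_le_of_le (h i))

lemma eq_of_le_of_wt_le {K S : Fin (n + 1) → Subgroup G} (h : ∀ i, K i ≤ S i)
    (hw : wt S ≤ wt K) : K = S := by
  have hc : ∀ i, Nat.card (S i) ≤ Nat.card (K i) := by
    by_contra hco
    push_neg at hco
    obtain ⟨i, hi⟩ := hco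
    have : wt K < wt S :=
      Finset.sum_lt_sum (fun j _ => card_le_of_le (h j)) ⟨i, Finset.mem_univ i, hi⟩
    omega
  funext i
  exact Subgroup.eq_of_le_of_card_ge (h i) (hc i)

end Aux

section Aux2

attribute [local instance] Fintype.ofFinite Classical.propDecidable

variable [Group G] {n : ℕ}

/-- extension of a slice by an element -/
def extS (T : Fin (n + 1) → Subgroup G) (g : G) : Fin (n + 1) → Subgroup G :=
  fun i => T i ⊔ Subgroup.zpowers g

lemma le_extS (T : Fin (n + 1) → Subgroup G) (g : G) : ∀ i, T i ≤ extS T g i :=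
  fun _ => le_sup_left

lemma self_mem_extS (T : Fin (n + 1) → Subgroup G) (g : G) (i : Fin (n + 1)) :
    g ∈ extS T g i :=
  Subgroup.mem_sup_right (Subgroup.mem_zpowers g)

lemma monotone_extS {T : Fin (n + 1) → Subgroup G} (hT : Monotone T) (g : G) :
    Monotone (extS T g) :=
  fun _ _ hij => sup_le_sup_right (hT hij) _

lemma extS_eq_self {T : Fin (n + 1) → Subgroup G} (hT : Monotone T) {g : G} (hg : g ∈ T 0) :
    extS T g = T := by
  funext i
  exact sup_eq_left.2 (Subgroup.zpowers_le.2 (hT (Fin.zero_le i) hg))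

lemma mem_of_extS_eq {T : Fin (n + 1) → Subgroup G} {g : G} (h : extS T g = T) : g ∈ T 0 := by
  have := self_mem_extS T g 0
  rwa [h] at this

lemma extS_mul_mem {T : Fin (n + 1) → Subgroup G} (hT : Monotone T) {g t : G} (ht : t ∈ T 0) :
    extS T (g * t) = extS T g := by
  funext i
  have hti : t ∈ T i := hT (Fin.zero_le i) ht
  apply le_antisymm
  · refine sup_le le_sup_left (Subgroup.zpowers_le.2 ?_)
    exact mul_mem (Subgroup.mem_sup_right (Subgroup.mem_zpowers g)) (Subgroup.mem_sup_left hti)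
  · refine sup_le le_sup_left (Subgroup.zpowers_le.2 ?_)
    have hmem := mul_mem
      (Subgroup.mem_sup_right (S := T i) (Subgroup.mem_zpowers (g * t)))
      (Subgroup.mem_sup_left (inv_mem hti))
    simpa [extS] using hmem

lemma mem_sliceNormalizer_iff {g : G} {T : Fin (n + 1) → Subgroup G} :
    g ∈ sliceNormalizer T ↔ ∀ i, g ∈ Subgroup.normalizer (T i : Set G) :=
  Subgroup.mem_iInf

lemma sliceConj_eq_self_of_mem {g : G} {T : Fin (n + 1) → Subgroup G}
    (hg : g ∈ sliceNormalizer T) : sliceConj g T = T := by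
  funext i
  ext k
  have hgi := Subgroup.mem_normalizer_iff.1 ((mem_sliceNormalizer_iff.1 hg) i)
  have h2 := hgi (g⁻¹ * k * g)
  have e : g * (g⁻¹ * k * g) * g⁻¹ = k := by group
  rw [e] at h2
  rw [mem_sliceConj]
  exact h2

variable [Finite G]

lemma mem_sliceNormalizer_of_le {h : G} {T : Fin (n + 1) → Subgroup G}
    (hle : ∀ i, T i ≤ sliceConj h T i) : h ∈ sliceNormalizer T := by
  have heq : ∀ i, T i = sliceConj h T i := fun i =>
    Subgroup.eq_of_le_of_card_ge (hle i) (card_sliceConj h T i).le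
  rw [mem_sliceNormalizer_iff]
  intro i
  rw [Subgroup.mem_normalizer_iff]
  intro x
  have e : h⁻¹ * (h * x * h⁻¹) * h = x := by group
  constructor
  · intro hx
    rw [heq i, mem_sliceConj, e]
    exact hx
  · intro hx
    rw [heq i, mem_sliceConj, e] at hx
    exact hx

lemma mark_diag {T : Fin (n + 1) → Subgroup G} (hT : Monotone T) :
    mark T T = sliceIndex T := by
  rw [mark_eq]
  have hcond : ∀ x : G ⧸ T 0,
      (∃ g, QuotientGroup.mk g = x ∧ ∀ i, T i ≤ sliceConj g T i) ↔
      (∃ g, QuotientGroup.mk g = x ∧ g ∈ sliceNormalizer T) := by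
    intro x
    constructor
    · rintro ⟨g, rfl, hg⟩
      exact ⟨g, rfl, mem_sliceNormalizer_of_le hg⟩
    · rintro ⟨g, rfl, hg⟩
      exact ⟨g, rfl, fun i => by rw [sliceConj_eq_self_of_mem hg]⟩
  rw [Nat.card_congr (Equiv.subtypeEquivRight hcond)]
  rw [sliceIndex, Subgroup.relIndex, Subgroup.index_eq_card]
  apply Nat.card_congr
  symm
  set N := sliceNormalizer T
  set H := (T 0).subgroupOf N
  refine Equiv.ofBijective
    (fun c => ⟨QuotientGroup.mk ((Quotient.out c : N) : G),
      ⟨((Quotient.out c : N) : G), rfl, (Quotient.out c).2⟩⟩) ⟨?_, ?_⟩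
  · intro c c' hcc
    have h1 : ((Quotient.out c : N) : G)⁻¹ * ((Quotient.out c' : N) : G) ∈ T 0 :=
      QuotientGroup.eq.1 (congrArg Subtype.val hcc)
    have h2 : (Quotient.out c : N)⁻¹ * (Quotient.out c') ∈ H :=
      Subgroup.mem_subgroupOf.2 (by push_cast; exact h1)
    rw [← QuotientGroup.out_eq' c, ← QuotientGroup.out_eq' c']
    exact QuotientGroup.eq.2 h2
  · rintro ⟨x, g, rfl, hg⟩
    refine ⟨QuotientGroup.mk (⟨g, hg⟩ : N), ?_⟩
    apply Subtype.ext
    show QuotientGroup.mk _ = QuotientGroup.mk g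
    set c : N ⧸ H := QuotientGroup.mk (⟨g, hg⟩ : N) with hc
    have h1 : (⟨g, hg⟩ : N)⁻¹ * Quotient.out c ∈ H := by
      rw [← QuotientGroup.eq, QuotientGroup.out_eq']
    have h1' := Subgroup.mem_subgroupOf.1 h1
    have h1'' : g⁻¹ * ((Quotient.out c : N) : G) ∈ T 0 := by
      have : (((⟨g, hg⟩ : N)⁻¹ * Quotient.out c : N) : G) = g⁻¹ * ((Quotient.out c : N) : G) := by
        push_cast; rfl
      rwa [this] at h1'
    have h2 : ((Quotient.out c : N) : G)⁻¹ * g ∈ T 0 := by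
      have e : ((Quotient.out c : N) : G)⁻¹ * g = (g⁻¹ * ((Quotient.out c : N) : G))⁻¹ := by group
      rw [e]
      exact inv_mem h1''
    exact QuotientGroup.eq.2 h2

end Aux2

section Burnside

attribute [local instance] Fintype.ofFinite Classical.propDecidable

variable [Group G] {n : ℕ}

/-- The set of cosets marked by the slice `T` in `G ⧸ S 0`. -/
def Xset (T S : Fin (n + 1) → Subgroup G) : Type _ :=
  {x : G ⧸ S 0 // ∃ h : G, QuotientGroup.mk h = x ∧ ∀ i, T i ≤ sliceConj h S i}

instance xsetFinite [Finite G] (T S : Fin (n + 1) → Subgroup G) : Finite (Xset T S) := by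
  unfold Xset; infer_instance

instance xsetAction (T S : Fin (n + 1) → Subgroup G) :
    MulAction (sliceNormalizer T) (Xset T S) where
  smul g x := ⟨(g : G) • x.1, by
    obtain ⟨h, hh, hcond⟩ := x.2
    refine ⟨(g : G) * h, by rw [← hh]; rfl, fun i => ?_⟩
    rw [← sliceConj_sliceConj]
    calc T i = sliceConj (↑g) T i := by rw [sliceConj_eq_self_of_mem g.2]
      _ ≤ sliceConj (↑g) (sliceConj h S) i := sliceConj_mono hcond i⟩
  one_smul x := by
    apply Subtype.ext
    show ((1 : sliceNormalizer T) : G) • x.1 = x.1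
    rw [OneMemClass.coe_one, one_smul]
  mul_smul g h x := by
    apply Subtype.ext
    show ((g * h : sliceNormalizer T) : G) • x.1 = (g : G) • ((h : G) • x.1)
    rw [Subgroup.coe_mul, mul_smul]

lemma xset_smul_coe {T S : Fin (n + 1) → Subgroup G} (g : sliceNormalizer T) (x : Xset T S) :
    (g • x).1 = (g : G) • x.1 := rfl

variable [Finite G]

lemma mark_extS_eq_card_fixedBy {T S : Fin (n + 1) → Subgroup G} (hS : Monotone S)
    (g : sliceNormalizer T) :
    mark (extS T ↑g) S = Nat.card (MulAction.fixedBy (Xset T S) g) := by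
  rw [mark_eq]
  have key : ∀ x : G ⧸ S 0,
      (∃ h, QuotientGroup.mk h = x ∧ ∀ i, extS T ↑g i ≤ sliceConj h S i) ↔
      ((∃ h, QuotientGroup.mk h = x ∧ ∀ i, T i ≤ sliceConj h S i) ∧ (g : G) • x = x) := by
    intro x
    constructor
    · rintro ⟨h, rfl, hc⟩
      refine ⟨⟨h, rfl, fun i => (le_extS T ↑g i).trans (hc i)⟩, ?_⟩
      show QuotientGroup.mk ((g : G) * h) = QuotientGroup.mk h
      rw [QuotientGroup.eq]
      have hg0 : (g : G) ∈ sliceConj h S 0 := hc 0 (self_mem_extS T (↑g) 0)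
      have hm : h⁻¹ * (g : G) * h ∈ S 0 := mem_sliceConj.1 hg0
      have e : ((g : G) * h)⁻¹ * h = (h⁻¹ * (g : G) * h)⁻¹ := by group
      rw [e]
      exact inv_mem hm
    · rintro ⟨⟨h, rfl, hc⟩, hfix⟩
      refine ⟨h, rfl, fun i => sup_le (hc i) (Subgroup.zpowers_le.2 ?_)⟩
      have h0 : (g : G) ∈ sliceConj h S 0 := by
        rw [mem_sliceConj]
        have hfix' : QuotientGroup.mk ((g : G) * h) = (QuotientGroup.mk h : G ⧸ S 0) := hfix
        rw [QuotientGroup.eq] at hfix'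
        have e : h⁻¹ * (g : G) * h = (((g : G) * h)⁻¹ * h)⁻¹ := by group
        rw [e]
        exact inv_mem hfix'
      exact Subgroup.map_mono (hS (Fin.zero_le i)) h0
  apply Nat.card_congr
  exact
    { toFun := fun z => ⟨⟨z.1, ((key z.1).1 z.2).1⟩, Subtype.ext (((key z.1).1 z.2).2)⟩
      invFun := fun y => ⟨y.1.1, (key y.1.1).2 ⟨y.1.2, congrArg Subtype.val y.2⟩⟩
      left_inv := fun z => rfl
      right_inv := fun y => by apply Subtype.ext; apply Subtype.ext; rfl }

lemma sum_mark_extS {T S : Fin (n + 1) → Subgroup G} (hT : Monotone T) (hS : Monotone S) :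
    ∃ k, ∑ c : (sliceNormalizer T) ⧸ ((T 0).subgroupOf (sliceNormalizer T)),
      mark (extS T ↑(Quotient.out c : sliceNormalizer T)) S = k * sliceIndex T := by
  set N := sliceNormalizer T
  set H := (T 0).subgroupOf N
  set f : N → ℕ := fun g => mark (extS T ↑g) S with hf
  -- Burnside
  have h1 : ∀ g : N, f g = Fintype.card (MulAction.fixedBy (Xset T S) g) := fun g =>
    (mark_extS_eq_card_fixedBy hS g).trans Nat.card_eq_fintype_card
  have hB : ∑ g : N, f g
      = Fintype.card (Quotient (MulAction.orbitRel N (Xset T S))) * Fintype.card N := by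
    rw [Finset.sum_congr rfl (fun g _ => h1 g)]
    exact MulAction.sum_card_fixedBy_eq_card_orbits_mul_card_group N (Xset T S)
  -- constancy on fibers
  have hconst : ∀ c : N ⧸ H, ∀ g : N, QuotientGroup.mk g = c → f g = f (Quotient.out c) := by
    intro c g hg
    have h1 : (Quotient.out c : N)⁻¹ * g ∈ H := by
      rw [← QuotientGroup.eq, QuotientGroup.out_eq', hg]
    have h2 : ((Quotient.out c : N)⁻¹ * g : N) = (Quotient.out c : N)⁻¹ * g := rfl
    have h3 : (((Quotient.out c : N)⁻¹ * g : N) : G) ∈ T 0 := Subgroup.mem_subgroupOf.1 h1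
    have h4 : (g : G) = ((Quotient.out c : N) : G) * (((Quotient.out c : N)⁻¹ * g : N) : G) := by
      push_cast
      group
    rw [hf]
    simp only
    rw [h4, extS_mul_mem hT h3]
  -- fiber cardinality
  have hfib : ∀ c : N ⧸ H,
      (Finset.univ.filter (fun g : N => QuotientGroup.mk g = c)).card = Nat.card H := by
    intro c
    rw [← Fintype.card_subtype, Nat.card_eq_fintype_card]
    apply Fintype.card_congr
    exact
      { toFun := fun g => ⟨(Quotient.out c : N)⁻¹ * g.1, by
          rw [← QuotientGroup.eq, QuotientGroup.out_eq', g.2]⟩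
        invFun := fun t => ⟨(Quotient.out c : N) * t.1, by
          have he : (QuotientGroup.mk ((Quotient.out c : N) * t.1) : N ⧸ H)
              = QuotientGroup.mk (Quotient.out c : N) := by
            rw [QuotientGroup.eq]
            have e2 : ((Quotient.out c : N) * t.1)⁻¹ * (Quotient.out c : N) = t.1⁻¹ := by group
            rw [e2]
            exact inv_mem t.2
          show (QuotientGroup.mk ((Quotient.out c : N) * t.1) : N ⧸ H) = c
          rw [he, QuotientGroup.out_eq']⟩
        left_inv := fun g => Subtype.ext (by group)
        right_inv := fun t => Subtype.ext (by group) }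
  -- decompose the sum
  have h2 : ∑ g : N, f g = ∑ c : N ⧸ H, Nat.card H * f (Quotient.out c) := by
    rw [← Finset.sum_fiberwise Finset.univ (fun g : N => (QuotientGroup.mk g : N ⧸ H)) f]
    apply Finset.sum_congr rfl
    intro c _
    rw [Finset.sum_congr rfl (fun g hg => hconst c g (Finset.mem_filter.1 hg).2),
      Finset.sum_const, hfib c, smul_eq_mul]
  have hLag : Nat.card N = Nat.card (N ⧸ H) * Nat.card H :=
    Subgroup.card_eq_card_quotient_mul_card_subgroup H
  have hidx : sliceIndex T = Nat.card (N ⧸ H) := by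
    rw [sliceIndex, Subgroup.relIndex, Subgroup.index_eq_card]
  refine ⟨Fintype.card (Quotient (MulAction.orbitRel N (Xset T S))), ?_⟩
  have hpos : 0 < Nat.card H := Nat.card_pos
  apply Nat.eq_of_mul_eq_mul_left hpos
  calc Nat.card ↥H * ∑ c : N ⧸ H, f (Quotient.out c)
      = ∑ c : N ⧸ H, Nat.card ↥H * f (Quotient.out c) := Finset.mul_sum _ _ _
    _ = ∑ g : N, f g := h2.symm
    _ = Fintype.card (Quotient (MulAction.orbitRel N (Xset T S))) * Fintype.card N := hB
    _ = Nat.card ↥H * (Fintype.card (Quotient (MulAction.orbitRel N (Xset T S))) * sliceIndex T) := by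
        rw [← Nat.card_eq_fintype_card (α := N), hLag, hidx]
        ring

end Burnside

section MarkConj

attribute [local instance] Fintype.ofFinite Classical.propDecidable

variable [Group G] {n : ℕ}

lemma conj_le_conj_iff (g h : G) (K S : Fin (n + 1) → Subgroup G) :
    (∀ i, sliceConj g K i ≤ sliceConj h S i) ↔ ∀ i, K i ≤ sliceConj (g⁻¹ * h) S i := by
  constructor
  · intro H i
    have h2 := sliceConj_mono (g := g⁻¹) H i
    rwa [sliceConj_sliceConj, sliceConj_sliceConj, inv_mul_cancel, sliceConj_one] at h2
  · intro H i
    have h2 := sliceConj_mono (g := g) H i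
    rwa [sliceConj_sliceConj, mul_inv_cancel_left] at h2

lemma mark_conj (g : G) (K S : Fin (n + 1) → Subgroup G) :
    mark (sliceConj g K) S = mark K S := by
  rw [mark_eq, mark_eq]
  apply Nat.card_congr
  exact
    { toFun := fun z => ⟨g⁻¹ • z.1, by
        obtain ⟨h, hh, hc⟩ := z.2
        exact ⟨g⁻¹ * h, by rw [← hh]; rfl, (conj_le_conj_iff g h K S).1 hc⟩⟩
      invFun := fun z => ⟨g • z.1, by
        obtain ⟨h, hh, hc⟩ := z.2
        refine ⟨g * h, by rw [← hh]; rfl, fun i => ?_⟩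
        have h2 := sliceConj_mono (g := g) hc i
        rwa [sliceConj_sliceConj] at h2⟩
      left_inv := fun z => Subtype.ext (smul_inv_smul g z.1)
      right_inv := fun z => Subtype.ext (inv_smul_smul g z.1) }

lemma exists_of_mark_ne_zero {K S : Fin (n + 1) → Subgroup G} (h : mark K S ≠ 0) :
    ∃ g, ∀ i, K i ≤ sliceConj g S i := by
  rw [mark_eq] at h
  obtain ⟨⟨x, g, _, hg⟩⟩ := Nat.card_ne_zero.1 h |>.1
  exact ⟨g, hg⟩

end MarkConj

section Main

attribute [local instance] Fintype.ofFinite Classical.propDecidable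

variable [Group G] [Finite G] {n : ℕ}
variable (R : Finset {S : Fin (n + 1) → Subgroup G // Monotone S})
variable (hR : ∀ S : {S : Fin (n + 1) → Subgroup G // Monotone S},
      ∃! T, T ∈ R ∧ ∃ g : G, sliceConj g S.1 = T.1)

/-- the chosen representative of the conjugacy class of a slice -/
noncomputable def rep (U : {S : Fin (n + 1) → Subgroup G // Monotone S}) : {x // x ∈ R} :=
  ⟨(hR U).choose, (hR U).choose_spec.1.1⟩

lemma rep_conj (U : {S : Fin (n + 1) → Subgroup G // Monotone S}) :
    ∃ g : G, sliceConj g U.1 = (rep R hR U).1.1 :=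
  (hR U).choose_spec.1.2

lemma rep_unique (U : {S : Fin (n + 1) → Subgroup G // Monotone S}) (T : {x // x ∈ R}) (g : G)
    (hg : sliceConj g U.1 = T.1.1) : rep R hR U = T := by
  have h2 := (hR U).choose_spec.2 T.1 ⟨T.2, g, hg⟩
  exact (Subtype.ext h2).symm

lemma rep_self (T : {x // x ∈ R}) : rep R hR T.1 = T :=
  rep_unique R hR T.1 T 1 (sliceConj_one T.1.1)

lemma wt_rep (U : {S : Fin (n + 1) → Subgroup G // Monotone S}) :
    wt (rep R hR U).1.1 = wt U.1 := by
  obtain ⟨g, hg⟩ := rep_conj R hR U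
  rw [← hg, wt_sliceConj]

lemma mark_rep (U : {S : Fin (n + 1) → Subgroup G // Monotone S})
    (S' : Fin (n + 1) → Subgroup G) : mark (rep R hR U).1.1 S' = mark U.1 S' := by
  obtain ⟨g, hg⟩ := rep_conj R hR U
  rw [← hg, mark_conj]

/-- the representative of the extension of `T` by the chosen representative of coset `c` -/
noncomputable def repExt (T : {x // x ∈ R})
    (c : (sliceNormalizer T.1.1) ⧸ ((T.1.1 0).subgroupOf (sliceNormalizer T.1.1))) :
    {x // x ∈ R} :=
  rep R hR ⟨extS T.1.1 ↑(Quotient.out c), monotone_extS T.1.2 _⟩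

lemma wt_le_wt_repExt (T : {x // x ∈ R})
    (c : (sliceNormalizer T.1.1) ⧸ ((T.1.1 0).subgroupOf (sliceNormalizer T.1.1))) :
    wt T.1.1 ≤ wt (repExt R hR T c).1.1 := by
  rw [repExt, wt_rep]
  exact wt_le_of_le (le_extS _ _)

lemma out_mem_iff (U : {x // x ∈ R})
    (c : (sliceNormalizer U.1.1) ⧸ ((U.1.1 0).subgroupOf (sliceNormalizer U.1.1))) :
    ((Quotient.out c : sliceNormalizer U.1.1) : G) ∈ U.1.1 0 ↔ c = QuotientGroup.mk 1 := by
  constructor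
  · intro h
    have h1 : Quotient.out c ∈ (U.1.1 0).subgroupOf (sliceNormalizer U.1.1) :=
      Subgroup.mem_subgroupOf.2 h
    rw [← QuotientGroup.out_eq' c]
    apply QuotientGroup.eq.2
    simpa using inv_mem h1
  · intro h
    subst h
    have h1 : ((QuotientGroup.mk (1 : sliceNormalizer U.1.1) :
        (sliceNormalizer U.1.1) ⧸ ((U.1.1 0).subgroupOf (sliceNormalizer U.1.1)))) =
        QuotientGroup.mk (Quotient.out (QuotientGroup.mk (1 : sliceNormalizer U.1.1))) :=
      (QuotientGroup.out_eq' _).symm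
    have h2 := QuotientGroup.eq.1 h1
    simp only [inv_one, one_mul] at h2
    exact Subgroup.mem_subgroupOf.1 h2

lemma repExt_le_wt (U : {x // x ∈ R})
    (c : (sliceNormalizer U.1.1) ⧸ ((U.1.1 0).subgroupOf (sliceNormalizer U.1.1)))
    (h : wt (repExt R hR U c).1.1 ≤ wt U.1.1) :
    repExt R hR U c = U ∧ c = QuotientGroup.mk 1 := by
  have hwt2 : wt (repExt R hR U c).1.1 = wt (extS U.1.1 ↑(Quotient.out c)) := by
    rw [repExt, wt_rep]
  have hle : wt U.1.1 ≤ wt (extS U.1.1 ↑(Quotient.out c)) := wt_le_of_le (le_extS _ _)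
  have heq : U.1.1 = extS U.1.1 ↑(Quotient.out c) :=
    eq_of_le_of_wt_le (le_extS _ _) (by omega)
  have hm : ((Quotient.out c : sliceNormalizer U.1.1) : G) ∈ U.1.1 0 :=
    mem_of_extS_eq heq.symm
  constructor
  · have hsl : (⟨extS U.1.1 ↑(Quotient.out c), monotone_extS U.1.2 _⟩ :
        {S : Fin (n + 1) → Subgroup G // Monotone S}) = U.1 := Subtype.ext heq.symm
    rw [repExt, hsl, rep_self]
  · exact (out_mem_iff R U c).1 hm

lemma repExt_mk_one (U : {x // x ∈ R}) :
    repExt R hR U (QuotientGroup.mk 1) = U := by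
  have hm := (out_mem_iff R U (QuotientGroup.mk 1)).2 rfl
  have heq : extS U.1.1 ((Quotient.out (QuotientGroup.mk (1 : sliceNormalizer U.1.1)) :
      sliceNormalizer U.1.1) : G) = U.1.1 := extS_eq_self U.1.2 hm
  have hsl : (⟨extS U.1.1 ((Quotient.out (QuotientGroup.mk (1 : sliceNormalizer U.1.1)) :
      sliceNormalizer U.1.1) : G), monotone_extS U.1.2 _⟩ :
      {S : Fin (n + 1) → Subgroup G // Monotone S}) = U.1 := Subtype.ext heq
  rw [repExt, hsl, rep_self]

/-- The ghost/mark congruence homomorphism. -/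
noncomputable def qhom : ({x // x ∈ R} → ℤ) →+ ∀ T : {x // x ∈ R}, ZMod (sliceIndex T.1.1) where
  toFun x := fun T => ∑ c : (sliceNormalizer T.1.1) ⧸ ((T.1.1 0).subgroupOf (sliceNormalizer T.1.1)),
    ((x (repExt R hR T c) : ℤ) : ZMod (sliceIndex T.1.1))
  map_zero' := by funext T; simp
  map_add' x y := by
    funext T
    simp [Finset.sum_add_distrib]

lemma qhom_apply (x : {x // x ∈ R} → ℤ) (T : {x // x ∈ R}) :
    qhom R hR x T = ∑ c : (sliceNormalizer T.1.1) ⧸ ((T.1.1 0).subgroupOf (sliceNormalizer T.1.1)),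
      ((x (repExt R hR T c) : ℤ) : ZMod (sliceIndex T.1.1)) := rfl

lemma qhom_mark (S' T : {x // x ∈ R}) :
    qhom R hR (fun U => (mark U.1.1 S'.1.1 : ℤ)) T = 0 := by
  rw [qhom_apply]
  obtain ⟨k, hk⟩ := sum_mark_extS (T := T.1.1) (S := S'.1.1) T.1.2 S'.1.2
  have h1 : ∀ c : (sliceNormalizer T.1.1) ⧸ ((T.1.1 0).subgroupOf (sliceNormalizer T.1.1)),
      ((((mark (repExt R hR T c).1.1 S'.1.1 : ℕ) : ℤ)) : ZMod (sliceIndex T.1.1)) =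
      ((mark (extS T.1.1 ↑(Quotient.out c)) S'.1.1 : ℕ) : ZMod (sliceIndex T.1.1)) := by
    intro c
    rw [repExt, mark_rep]
    push_cast
    rfl
  rw [Finset.sum_congr rfl (fun c _ => h1 c), ← Nat.cast_sum, hk]
  push_cast
  simp [ZMod.natCast_self]

end Main

section Main2

attribute [local instance] Fintype.ofFinite Classical.propDecidable

variable [Group G] [Finite G] {n : ℕ}
variable (R : Finset {S : Fin (n + 1) → Subgroup G // Monotone S})
variable (hR : ∀ S : {S : Fin (n + 1) → Subgroup G // Monotone S},
      ∃! T, T ∈ R ∧ ∃ g : G, sliceConj g S.1 = T.1)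

lemma qhom_single (T U : {x // x ∈ R}) (hwt : wt T.1.1 ≤ wt U.1.1) :
    qhom R hR (fun V => if V = T then (1 : ℤ) else 0) U = if U = T then 1 else 0 := by
  rw [qhom_apply]
  have hchar : ∀ c : (sliceNormalizer U.1.1) ⧸ ((U.1.1 0).subgroupOf (sliceNormalizer U.1.1)),
      (repExt R hR U c = T) ↔ (U = T ∧ c = QuotientGroup.mk 1) := by
    intro c
    constructor
    · intro h
      have h1 : wt (repExt R hR U c).1.1 ≤ wt U.1.1 := by rw [h]; exact hwt
      obtain ⟨h2, h3⟩ := repExt_le_wt R hR U c h1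
      exact ⟨h2.symm.trans h, h3⟩
    · rintro ⟨rfl, rfl⟩
      exact repExt_mk_one R hR U
  have hterm : ∀ c : (sliceNormalizer U.1.1) ⧸ ((U.1.1 0).subgroupOf (sliceNormalizer U.1.1)),
      (((if repExt R hR U c = T then (1 : ℤ) else 0) : ℤ) : ZMod (sliceIndex U.1.1)) =
      if U = T ∧ c = QuotientGroup.mk 1 then 1 else 0 := by
    intro c
    by_cases hc : repExt R hR U c = T
    · rw [if_pos hc, if_pos ((hchar c).1 hc)]; simp
    · rw [if_neg hc, if_neg (fun h => hc ((hchar c).2 h))]; simp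
  rw [Finset.sum_congr rfl (fun c _ => hterm c)]
  by_cases hUT : U = T
  · simp only [hUT, true_and]
    rw [Finset.sum_ite_eq' Finset.univ (QuotientGroup.mk 1) (fun _ => (1 : ZMod (sliceIndex U.1.1)))]
    simp [hUT]
  · simp [hUT]

lemma qhom_surjective : Function.Surjective (qhom R hR) := by
  set W := (n + 1) * Nat.card G with hW
  have main : ∀ m : ℕ, ∀ y : (∀ T : {x // x ∈ R}, ZMod (sliceIndex T.1.1)),
      ∃ x : {x // x ∈ R} → ℤ,
      (∀ T, W < wt T.1.1 + m → qhom R hR x T = y T) ∧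
      (∀ T, x T ≠ 0 → W < wt T.1.1 + m) := by
    intro m
    induction m with
    | zero =>
      intro y
      refine ⟨0, fun T h => absurd h (by have := wt_le_max T.1.1; omega), fun T h => absurd rfl h⟩
    | succ m ih =>
      intro y
      obtain ⟨x, hx1, hx2⟩ := ih y
      choose z hz using fun T : {x // x ∈ R} =>
        ZMod.intCast_surjective (n := sliceIndex T.1.1) (y T - qhom R hR x T)
      set D : Finset {x // x ∈ R} := Finset.univ.filter (fun T => wt T.1.1 + m = W) with hD
      set x' : {x // x ∈ R} → ℤ :=
        x + ∑ T ∈ D, z T • (fun V => if V = T then (1 : ℤ) else 0) with hx'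
      have hqx' : ∀ U, qhom R hR x' U = qhom R hR x U +
          ∑ T ∈ D, z T • qhom R hR (fun V => if V = T then (1 : ℤ) else 0) U := by
        intro U
        rw [hx', map_add, map_sum]
        simp only [Pi.add_apply, Finset.sum_apply]
        congr 1
        apply Finset.sum_congr rfl
        intro T _
        rw [map_zsmul]
        rfl
      refine ⟨x', ?_, ?_⟩
      · intro U hU
        rcases (by omega : wt U.1.1 + m = W ∨ W < wt U.1.1 + m) with hcase | hcase
        · rw [hqx' U]
          have hsum : ∑ T ∈ D, z T • qhom R hR (fun V => if V = T then (1 : ℤ) else 0) U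
              = (z U : ZMod (sliceIndex U.1.1)) := by
            have hterm : ∀ T ∈ D, z T • qhom R hR (fun V => if V = T then (1 : ℤ) else 0) U
                = if U = T then (z T : ZMod (sliceIndex U.1.1)) else 0 := by
              intro T hT
              have hTD : wt T.1.1 + m = W := (Finset.mem_filter.1 hT).2
              rw [qhom_single R hR T U (by omega)]
              split
              · rw [Int.smul_one_eq_cast]
              · simp
            rw [Finset.sum_congr rfl hterm,
              Finset.sum_ite_eq D U (fun T => (z T : ZMod (sliceIndex U.1.1)))]
            simp [hD, Finset.mem_filter, hcase]
          rw [hsum, hz U]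
          ring
        · rw [hqx' U]
          have hsum : ∑ T ∈ D, z T • qhom R hR (fun V => if V = T then (1 : ℤ) else 0) U = 0 := by
            apply Finset.sum_eq_zero
            intro T hT
            have hTD : wt T.1.1 + m = W := (Finset.mem_filter.1 hT).2
            have hne : U ≠ T := by
              intro h
              rw [h] at hcase
              omega
            rw [qhom_single R hR T U (by omega)]
            simp [hne]
          rw [hsum, add_zero]
          exact hx1 U hcase
      · intro U hU
        by_cases hcase : wt U.1.1 + m = W
        · omega
        · have hxU : x' U = x U := by
            rw [hx']
            simp only [Pi.add_apply, Finset.sum_apply, Pi.smul_apply, smul_eq_mul]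
            have : ∀ T ∈ D, z T * (if U = T then (1 : ℤ) else 0) = 0 := by
              intro T hT
              have hTD : wt T.1.1 + m = W := (Finset.mem_filter.1 hT).2
              have hne : U ≠ T := fun h => hcase (by rw [h]; exact hTD)
              simp [hne]
            rw [Finset.sum_congr rfl this]
            simp
          rw [hxU] at hU
          have := hx2 U hU
          omega
  intro y
  obtain ⟨x, hx1, _⟩ := main (W + 1) y
  exact ⟨x, funext fun T => hx1 T (by omega)⟩

end Main2

section Main3

attribute [local instance] Fintype.ofFinite Classical.propDecidable

variable [Group G] [Finite G] {n : ℕ}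
variable (R : Finset {S : Fin (n + 1) → Subgroup G // Monotone S})
variable (hR : ∀ S : {S : Fin (n + 1) → Subgroup G // Monotone S},
      ∃! T, T ∈ R ∧ ∃ g : G, sliceConj g S.1 = T.1)

lemma qhom_top (x : {x // x ∈ R} → ℤ) (T : {x // x ∈ R})
    (hx : ∀ U, x U ≠ 0 → wt U.1.1 ≤ wt T.1.1) :
    qhom R hR x T = ((x T : ℤ) : ZMod (sliceIndex T.1.1)) := by
  rw [qhom_apply]
  rw [Finset.sum_eq_single (QuotientGroup.mk (1 : sliceNormalizer T.1.1))]
  · rw [repExt_mk_one]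
  · intro c _ hc
    suffices h : x (repExt R hR T c) = 0 by rw [h]; simp
    by_contra hne
    obtain ⟨_, h3⟩ := repExt_le_wt R hR T c (hx _ hne)
    exact hc h3
  · intro h
    exact absurd (Finset.mem_univ _) h

lemma mem_closure_of_qhom_eq_zero :
    ∀ j : ℕ, ∀ x : {x // x ∈ R} → ℤ, qhom R hR x = 0 →
    (∀ U, x U ≠ 0 → wt U.1.1 ≤ j) →
    x ∈ AddSubgroup.closure
      (Set.range (fun S : {x // x ∈ R} => fun T : {x // x ∈ R} => (mark T.1.1 S.1.1 : ℤ))) := by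
  intro j
  induction j with
  | zero =>
    intro x hq hx
    have hx0 : x = 0 := funext fun U => by
      by_contra h
      have h1 := hx U h
      have h2 := wt_pos U.1.1
      omega
    rw [hx0]
    exact zero_mem _
  | succ j ih =>
    intro x hq hx
    set D := Finset.univ.filter (fun T : {x // x ∈ R} => wt T.1.1 = j + 1) with hD
    set cf : {x // x ∈ R} → ℤ := fun T => x T / (sliceIndex T.1.1 : ℤ) with hcf
    have hdvd : ∀ T ∈ D, ((sliceIndex T.1.1 : ℤ)) * cf T = x T := by
      intro T hT
      have hwtT : wt T.1.1 = j + 1 := (Finset.mem_filter.1 hT).2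
      have h1 : qhom R hR x T = ((x T : ℤ) : ZMod (sliceIndex T.1.1)) :=
        qhom_top R hR x T (fun U hU => by rw [hwtT]; exact hx U hU)
      have h2 : ((x T : ℤ) : ZMod (sliceIndex T.1.1)) = 0 := by
        rw [← h1]
        exact congrFun hq T
      exact Int.mul_ediv_cancel' ((ZMod.intCast_zmod_eq_zero_iff_dvd _ _).1 h2)
    set x' := x - ∑ T ∈ D, cf T • (fun U : {x // x ∈ R} => (mark U.1.1 T.1.1 : ℤ)) with hx'
    have hx'U : ∀ U, x' U = x U - ∑ T ∈ D, cf T * (mark U.1.1 T.1.1 : ℤ) := by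
      intro U
      rw [hx']
      simp [Finset.sum_apply]
    have hvz : ∀ T : {x // x ∈ R},
        qhom R hR (fun U : {x // x ∈ R} => (mark U.1.1 T.1.1 : ℤ)) = 0 :=
      fun T => funext fun U => qhom_mark R hR T U
    have hx'q : qhom R hR x' = 0 := by
      rw [hx', map_sub, map_sum, hq]
      have : ∀ T ∈ D, qhom R hR (cf T • (fun U : {x // x ∈ R} => (mark U.1.1 T.1.1 : ℤ))) = 0 := by
        intro T _
        rw [map_zsmul, hvz T, smul_zero]
      rw [Finset.sum_congr rfl this]
      simp
    have hmark0 : ∀ U : {x // x ∈ R}, j + 1 ≤ wt U.1.1 → ∀ T ∈ D, T ≠ U →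
        mark U.1.1 T.1.1 = 0 := by
      intro U hwU T hT hne
      have hwtT : wt T.1.1 = j + 1 := (Finset.mem_filter.1 hT).2
      by_contra hm
      obtain ⟨h, hh⟩ := exists_of_mark_ne_zero hm
      have h2 : U.1.1 = sliceConj h T.1.1 := by
        apply eq_of_le_of_wt_le hh
        rw [wt_sliceConj]
        have h1 : wt U.1.1 ≤ wt (sliceConj h T.1.1) := wt_le_of_le hh
        rw [wt_sliceConj] at h1
        omega
      have e1 : rep R hR T.1 = U := rep_unique R hR T.1 U h h2.symm
      have e2 : rep R hR T.1 = T := rep_self R hR T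
      exact hne (e2.symm.trans e1)
    have hx'supp : ∀ U, x' U ≠ 0 → wt U.1.1 ≤ j := by
      intro U hU
      by_contra hgt
      push_neg at hgt
      have hge : j + 1 ≤ wt U.1.1 := hgt
      rcases eq_or_lt_of_le hge with heq | hlt
      · -- U has weight j + 1, so U ∈ D
        have hUD : U ∈ D := Finset.mem_filter.2 ⟨Finset.mem_univ U, heq.symm⟩
        have hsum : ∑ T ∈ D, cf T * (mark U.1.1 T.1.1 : ℤ)
            = cf U * (mark U.1.1 U.1.1 : ℤ) := by
          apply Finset.sum_eq_single_of_mem U hUD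
          intro T hT hne
          rw [hmark0 U hge T hT hne]
          simp
        have hdiag : mark U.1.1 U.1.1 = sliceIndex U.1.1 := mark_diag U.1.2
        have : x' U = 0 := by
          rw [hx'U U, hsum, hdiag, mul_comm, hdvd U hUD, sub_self]
        exact hU this
      · -- U has weight > j + 1
        have hxU : x U = 0 := by
          by_contra h
          have := hx U h
          omega
        have hsum : ∑ T ∈ D, cf T * (mark U.1.1 T.1.1 : ℤ) = 0 := by
          apply Finset.sum_eq_zero
          intro T hT
          have hwtT : wt T.1.1 = j + 1 := (Finset.mem_filter.1 hT).2
          have hne : T ≠ U := by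
            intro h
            rw [h] at hwtT
            omega
          rw [hmark0 U hge T hT hne]
          simp
        have : x' U = 0 := by rw [hx'U U, hsum, hxU, sub_zero]
        exact hU this
    have hmem : x' ∈ AddSubgroup.closure
        (Set.range (fun S : {x // x ∈ R} => fun T : {x // x ∈ R} => (mark T.1.1 S.1.1 : ℤ))) :=
      ih x' hx'q hx'supp
    have hxx : x = x' + ∑ T ∈ D, cf T • (fun U : {x // x ∈ R} => (mark U.1.1 T.1.1 : ℤ)) := by
      rw [hx']
      abel
    rw [hxx]
    refine AddSubgroup.add_mem _ hmem (AddSubgroup.sum_mem _ ?_)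
    intro T _
    exact AddSubgroup.zsmul_mem _ (AddSubgroup.subset_closure (Set.mem_range_self T)) _

end Main3

attribute [local instance] Fintype.ofFinite Classical.propDecidable in
/-- the quotient of `∏_{T̄} ℤ` by the subgroup generated by the mark
vectors `v_{S̄}` is isomorphic to `⊕_{S̄} ℤ/[N_G(S̄):S₀]ℤ`. -/
theorem cokernel_ghost_map {n : ℕ} [Group G] [Finite G]
    (R : Finset {S : Fin (n + 1) → Subgroup G // Monotone S})
    (hR : ∀ S : {S : Fin (n + 1) → Subgroup G // Monotone S},
      ∃! T, T ∈ R ∧ ∃ g : G, sliceConj g S.1 = T.1) :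
    Nonempty
      (((R → ℤ) ⧸ AddSubgroup.closure
          (Set.range (fun S : R => fun T : R => (mark T.1.1 S.1.1 : ℤ)))) ≃+
        ∀ S : R, ZMod (sliceIndex S.1.1)) := by
  have hker : AddSubgroup.closure
      (Set.range (fun S : R => fun T : R => (mark T.1.1 S.1.1 : ℤ))) = (qhom R hR).ker := by
    apply le_antisymm
    · rw [AddSubgroup.closure_le]
      rintro _ ⟨S', rfl⟩
      rw [SetLike.mem_coe, AddMonoidHom.mem_ker]
      exact funext fun T => qhom_mark R hR S' T
    · intro x hx
      exact mem_closure_of_qhom_eq_zero R hR ((n + 1) * Nat.card G) x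
        (AddMonoidHom.mem_ker.1 hx) (fun U _ => wt_le_max U.1.1)
  rw [hker]
  exact ⟨QuotientAddGroup.quotientKerEquivOfSurjective _ (qhom_surjective R hR)⟩
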